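/- For every z ∈ ℝ the factorization 𝓝(z) = (I_μ ⊗ Ũ_q(z)) · Â · (I_ν ⊗ W̃_r(z)) holds, where ⊗ denotes the Kronecker product. Moreover the matrices Â and 𝒜(0) are related by (D_μ ⊗ I_q)·Â·(D_ν ⊗ I_r) = (I_μ ⊗ D_q)·𝒜(0)·(I_ν ⊗ D_r). -/

import Mathlib

open Matrix Kronecker

noncomputable section

/-- The `k × k` shift matrix with `(i,j)` entry `δ_{i+1,j}`. -/
def Sh (k : ℕ) : Matrix (Fin k) (Fin k) ℝ :=
  Matrix.of fun i j => if (i : ℕ) + 1 = (j : ℕ) then 1 else 0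

/-- The matrix `A^k(z) ∈ ℝ^{q×r}`, with entries
`k!/(i!·j!·(k−i−j)!)·z^{k−i−j} = C(k,i)·C(k−i,j)·z^{k−i−j}` for `i+j ≤ k`, else `0`. -/
def Amat (q r k : ℕ) (z : ℝ) : Matrix (Fin q) (Fin r) ℝ :=
  Matrix.of fun i j =>
    if (i : ℕ) + (j : ℕ) ≤ k then
      (Nat.choose k i : ℝ) * (Nat.choose (k - i) j : ℝ) * z ^ (k - i - j)
    else 0

/-- The block matrix `𝒜(z) ∈ ℝ^{μq×νr}` with `(i,j)` block `A^{i+j}(z)`. -/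
def Acal (q r μ ν : ℕ) (z : ℝ) : Matrix (Fin μ × Fin q) (Fin ν × Fin r) ℝ :=
  Matrix.of fun p p' => Amat q r ((p.1 : ℕ) + (p'.1 : ℕ)) z p.2 p'.2

/-- `A^0 = e₀ f₀ᵀ ∈ ℝ^{q×r}`. -/
def A0 (q r : ℕ) : Matrix (Fin q) (Fin r) ℝ :=
  Matrix.of fun a b => if (a : ℕ) = 0 ∧ (b : ℕ) = 0 then 1 else 0

/-- The block matrix `Ā ∈ ℝ^{μq×νr}` with `(i,j)` block `(S_qᵀ)^j · A^0 · S_r^i`. -/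
def Abar (q r μ ν : ℕ) : Matrix (Fin μ × Fin q) (Fin ν × Fin r) ℝ :=
  Matrix.of fun p p' =>
    (((Sh q)ᵀ) ^ (p'.1 : ℕ) * A0 q r * (Sh r) ^ (p.1 : ℕ)) p.2 p'.2

/-- `J_k(z) = z·I_k + S_kᵀ`. -/
def Jmat (k : ℕ) (z : ℝ) : Matrix (Fin k) (Fin k) ℝ := z • 1 + (Sh k)ᵀ

/-- The block lower-triangular matrix `𝓛_{m,k}(z)` with `(i,j)` block `C(i,j)·J_k(z)^{i−j}`
for `i ≥ j` and `0` otherwise. -/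
def Lmat (m k : ℕ) (z : ℝ) : Matrix (Fin m × Fin k) (Fin m × Fin k) ℝ :=
  Matrix.of fun p p' =>
    if (p'.1 : ℕ) ≤ (p.1 : ℕ) then
      (Nat.choose p.1 p'.1 : ℝ) * ((Jmat k z) ^ ((p.1 : ℕ) - (p'.1 : ℕ))) p.2 p'.2
    else 0

/-- Natural (block row-major) identification of `Fin (m*n)` with `Fin m × Fin n`. -/
def bIdx (m n : ℕ) : Fin (m * n) → Fin m × Fin n := fun x => finProdFinEquiv.symm x

/-- `M^{(n)}(z) ∈ ℝ^{q×r}`, the `n`-th derivative of `M(z) = u(z)w(z)`,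
whose `(a,b)` entry is the `n`-th derivative of `z^{a+b}`. -/
def Md (q r n : ℕ) (z : ℝ) : Matrix (Fin q) (Fin r) ℝ :=
  Matrix.of fun a b => iteratedDeriv n (fun t : ℝ => t ^ ((a : ℕ) + (b : ℕ))) z

/-- The block matrix `𝓜(z) ∈ ℝ^{μq×νr}` with `(i,j)` block `M^{(i+j)}(z)`. -/
def Mcal (q r μ ν : ℕ) (z : ℝ) : Matrix (Fin μ × Fin q) (Fin ν × Fin r) ℝ :=
  Matrix.of fun p p' => Md q r ((p.1 : ℕ) + (p'.1 : ℕ)) z p.2 p'.2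

/-- The block matrix `𝓝(z) ∈ ℝ^{μq×νr}` with `(i,j)` block `M^{(i+j)}(z)/(i!·j!)`. -/
def Ncal (q r μ ν : ℕ) (z : ℝ) : Matrix (Fin μ × Fin q) (Fin ν × Fin r) ℝ :=
  Matrix.of fun p p' =>
    Md q r ((p.1 : ℕ) + (p'.1 : ℕ)) z p.2 p'.2 /
      ((Nat.factorial (p.1 : ℕ) : ℝ) * (Nat.factorial (p'.1 : ℕ) : ℝ))

/-- `𝓝^0(z) = (M(z)/0!, …, M^{(ν−1)}(z)/(ν−1)!) ∈ ℝ^{q×νr}`. -/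
def Ncal0 (q r ν : ℕ) (z : ℝ) : Matrix (Fin q) (Fin ν × Fin r) ℝ :=
  Matrix.of fun a p => Md q r (p.1 : ℕ) z a p.2 / (Nat.factorial (p.1 : ℕ) : ℝ)

/-- `𝓜^0(z) = (M(z), M'(z), …, M^{(ν−1)}(z)) ∈ ℝ^{q×νr}`. -/
def M0cal (q r ν : ℕ) (z : ℝ) : Matrix (Fin q) (Fin ν × Fin r) ℝ :=
  Matrix.of fun a p => Md q r (p.1 : ℕ) z a p.2

/-- `U_q(z)` with columns `u(z), u'(z), …, u^{(q−1)}(z)`, where `u_a(z) = z^a`. -/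
def Uq (q : ℕ) (z : ℝ) : Matrix (Fin q) (Fin q) ℝ :=
  Matrix.of fun a j => iteratedDeriv (j : ℕ) (fun t : ℝ => t ^ (a : ℕ)) z

/-- `W_r(z)` with rows `w(z), w'(z), …, w^{(r−1)}(z)`, where `w_b(z) = z^b`. -/
def Wrm (r : ℕ) (z : ℝ) : Matrix (Fin r) (Fin r) ℝ :=
  Matrix.of fun i b => iteratedDeriv (i : ℕ) (fun t : ℝ => t ^ (b : ℕ)) z

/-- `Ũ_m(z)` with entries `C(i,j)·z^{i−j}` for `i ≥ j` and `0` otherwise. -/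
def Ut (m : ℕ) (z : ℝ) : Matrix (Fin m) (Fin m) ℝ :=
  Matrix.of fun i j =>
    if (j : ℕ) ≤ (i : ℕ) then (Nat.choose i j : ℝ) * z ^ ((i : ℕ) - (j : ℕ)) else 0

/-- `W̃_m(z)` with entries `C(j,i)·z^{j−i}` for `j ≥ i` and `0` otherwise. -/
def Wt (m : ℕ) (z : ℝ) : Matrix (Fin m) (Fin m) ℝ :=
  Matrix.of fun i j =>
    if (i : ℕ) ≤ (j : ℕ) then (Nat.choose j i : ℝ) * z ^ ((j : ℕ) - (i : ℕ)) else 0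

/-- `D_m`, the diagonal matrix with `(i,i)` entry `i!`. -/
def Dm (m : ℕ) : Matrix (Fin m) (Fin m) ℝ :=
  Matrix.diagonal fun i => (Nat.factorial (i : ℕ) : ℝ)

/-- The block matrix `Â` whose `(i,j)` block has `(k,l)` entry `C(i+j,i)` if `k+l = i+j`, else 0. -/
def Ahat (q r μ ν : ℕ) : Matrix (Fin μ × Fin q) (Fin ν × Fin r) ℝ :=
  Matrix.of fun p p' =>
    if (p.2 : ℕ) + (p'.2 : ℕ) = (p.1 : ℕ) + (p'.1 : ℕ) then
      (Nat.choose ((p.1 : ℕ) + (p'.1 : ℕ)) (p.1 : ℕ) : ℝ)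
    else 0

/-- `F(z) ∈ ℝ^{r×(r−1)}` with `F_{ii} = −z`, `F_{i+1,i} = 1`, else `0`. -/
def Fm (r : ℕ) (z : ℝ) : Matrix (Fin r) (Fin (r - 1)) ℝ :=
  Matrix.of fun a b =>
    if (a : ℕ) = (b : ℕ) then -z else if (a : ℕ) = (b : ℕ) + 1 then 1 else 0

/-- `F'(z)`, the (constant) derivative of `F(z)`: `−1` on the diagonal, `0` elsewhere. -/
def Fm' (r : ℕ) : Matrix (Fin r) (Fin (r - 1)) ℝ :=
  Matrix.of fun a b => if (a : ℕ) = (b : ℕ) then -1 else 0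

/-- `G(z) ∈ ℝ^{r×r}` with entries `z^{j−i−1}` for `j > i`, else `0`. -/
def Gm (r : ℕ) (z : ℝ) : Matrix (Fin r) (Fin r) ℝ :=
  Matrix.of fun i j => if (i : ℕ) < (j : ℕ) then z ^ ((j : ℕ) - (i : ℕ) - 1) else 0

/-- entrywise `j`-th derivative `G^{(n)}(z)`. -/
def Gd (r n : ℕ) (z : ℝ) : Matrix (Fin r) (Fin r) ℝ :=
  Matrix.of fun i j =>
    iteratedDeriv n (fun t : ℝ => if (i : ℕ) < (j : ℕ) then t ^ ((j : ℕ) - (i : ℕ) - 1) else 0) z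

/-- the row vector `w(z)` with entries `z^b`. -/
def wv (r : ℕ) (z : ℝ) : Fin r → ℝ := fun b => z ^ (b : ℕ)

/-- the `n`-th derivative `w^{(n)}(z)`. -/
def wd (r n : ℕ) (z : ℝ) : Fin r → ℝ := fun b => iteratedDeriv n (fun t : ℝ => t ^ (b : ℕ)) z

/-- the `n`-th derivative `u^{(n)}(z)` of the column vector `u(z)` with entries `z^a`. -/
def ud (q n : ℕ) (z : ℝ) : Fin q → ℝ := fun a => iteratedDeriv n (fun t : ℝ => t ^ (a : ℕ)) z

/-- The matrix `K̄(z)`: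
`[[I_q⊗F(z) + S_q⊗F'(z), −ℓ_q fᵀ ⊗ G(z)], [0, I_{ν−q}⊗I_r − S_{ν−q}⊗G(z)]]`. -/
def Kbar (q r ν : ℕ) (z : ℝ) :
    Matrix (Fin ν × Fin r) ((Fin q × Fin (r - 1)) ⊕ (Fin (ν - q) × Fin r)) ℝ :=
  Matrix.of fun p s =>
    match s with
    | Sum.inl c =>
        (if (p.1 : ℕ) = (c.1 : ℕ) then Fm r z p.2 c.2 else 0) +
        (if (p.1 : ℕ) + 1 = (c.1 : ℕ) then Fm' r p.2 c.2 else 0)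
    | Sum.inr c =>
        (if (p.1 : ℕ) = q + (c.1 : ℕ) then (if p.2 = c.2 then 1 else 0) else 0) +
        (if (p.1 : ℕ) + 1 = q + (c.1 : ℕ) then -(Gm r z p.2 c.2) else 0)

/-- `F_k(z) ∈ ℝ^{(r−k)×(r−1−k)}`. -/
def Fmk (r k : ℕ) (z : ℝ) : Matrix (Fin (r - k)) (Fin (r - (k + 1))) ℝ :=
  Matrix.of fun a b =>
    if (a : ℕ) = (b : ℕ) then -z else if (a : ℕ) = (b : ℕ) + 1 then 1 else 0

/-- `F_k'(z)`, the (constant) derivative of `F_k(z)`. -/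
def Fmk' (r k : ℕ) : Matrix (Fin (r - k)) (Fin (r - (k + 1))) ℝ :=
  Matrix.of fun a b => if (a : ℕ) = (b : ℕ) then -1 else 0

/-- `K_k(z) = I_ν ⊗ F_k(z) + S_ν ⊗ F_k'(z)`. -/
def Kk (ν r k : ℕ) (z : ℝ) :
    Matrix (Fin ν × Fin (r - k)) (Fin ν × Fin (r - (k + 1))) ℝ :=
  (1 : Matrix (Fin ν) (Fin ν) ℝ) ⊗ₖ Fmk r k z + Sh ν ⊗ₖ Fmk' r k

/-- `KP ν r z m = K_0(z) · K_1(z) ⋯ K_{m−1}(z)` (so `KP ν r z μ = 𝒦^{μ−1}(z)`). -/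
def KP (ν r : ℕ) (z : ℝ) : (m : ℕ) → Matrix (Fin ν × Fin r) (Fin ν × Fin (r - m)) ℝ
  | 0 => Matrix.of fun p p' => if p.1 = p'.1 ∧ (p.2 : ℕ) = (p'.2 : ℕ) then 1 else 0
  | m + 1 => KP ν r z m * Kk ν r m z

/-- `𝒜^0 = (A^0, A^1, …, A^{ν−1}) ∈ ℝ^{q×νr}` (at `z = 0`). -/
def A0row (q r ν : ℕ) : Matrix (Fin q) (Fin ν × Fin r) ℝ :=
  Matrix.of fun a p =>
    if (a : ℕ) + (p.2 : ℕ) = (p.1 : ℕ) then (Nat.choose (p.1 : ℕ) (a : ℕ) : ℝ) else 0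

/-- `B^k ∈ ℝ^{r×q}` with entries `(−1)^i·C(q,k+1)` if `i+j = k`, else `0`. -/
def Bk (q r k : ℕ) : Matrix (Fin r) (Fin q) ℝ :=
  Matrix.of fun i j =>
    if (i : ℕ) + (j : ℕ) = k then (-1 : ℝ) ^ (i : ℕ) * (Nat.choose q (k + 1) : ℝ) else 0

/-- `𝓑^0 ∈ ℝ^{νr×q}`, the blocks `B^0, …, B^{ν−1}` stacked vertically. -/
def B0cal (q r ν : ℕ) : Matrix (Fin ν × Fin r) (Fin q) ℝ :=
  Matrix.of fun p j => Bk q r (p.1 : ℕ) p.2 j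

/-- Left multiplication by a fixed matrix, as a linear map. -/
def mulLeftLM {m n p : Type*} [Fintype n] (M : Matrix m n ℝ) :
    Matrix n p ℝ →ₗ[ℝ] Matrix m p ℝ where
  toFun X := M * X
  map_add' X Y := Matrix.mul_add M X Y
  map_smul' c X := by simp [Matrix.mul_smul]

/-- The right inverse `𝓜(z)⁺`. -/
def Mplus (q r μ ν : ℕ) (z : ℝ) : Matrix (Fin ν × Fin r) (Fin μ × Fin q) ℝ :=
  ((1 : Matrix (Fin ν) (Fin ν) ℝ) ⊗ₖ (Wrm r z)⁻¹) * (Lmat ν r 0)⁻¹ *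
    (Abar q r μ ν)ᵀ * (Lmat μ q 0)⁻¹ * ((1 : Matrix (Fin μ) (Fin μ) ℝ) ⊗ₖ (Uq q z)⁻¹)


section statement6Aux

open Finset

lemma st6_iter_pow_aux (n : ℕ) (c : ℝ) (m : ℕ) (z : ℝ) :
    iteratedDeriv n (fun t : ℝ => c * t ^ m) z = c * (m.descFactorial n : ℝ) * z ^ (m - n) := by
  induction n generalizing c m z with
  | zero => simp
  | succ n ih =>
    rw [iteratedDeriv_succ']
    cases m with
    | zero =>
      have h1 : deriv (fun t : ℝ => c * t ^ 0) = fun t : ℝ => (0:ℝ) * t ^ 0 := by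
        funext t; simp
      rw [h1, ih]; simp
    | succ m =>
      have h1 : deriv (fun t : ℝ => c * t ^ (m+1)) = fun t : ℝ => (c * ((m:ℝ)+1)) * t ^ m := by
        funext t
        rw [deriv_const_mul _ (differentiableAt_pow (m+1)), deriv_pow_field]
        push_cast; ring
      rw [h1, ih, Nat.succ_descFactorial_succ]
      push_cast; ring_nf

lemma st6_iter_pow (n m : ℕ) (z : ℝ) :
    iteratedDeriv n (fun t : ℝ => t ^ m) z = (m.descFactorial n : ℝ) * z ^ (m - n) := by
  simpa using st6_iter_pow_aux n 1 m z

lemma st6_key_sum (k l n qq rr : ℕ) (hk : k < qq) (hl : l < rr) :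
    ∑ a ∈ Finset.range qq, ∑ b ∈ Finset.range rr,
      (if a + b = n then k.choose a * l.choose b else 0) = (k + l).choose n := by
  rw [Nat.add_choose_eq]
  rw [← Finset.sum_product']
  rw [← Finset.sum_filter]
  apply Finset.sum_subset
  · intro p hp
    simp only [Finset.mem_filter] at hp
    simpa [Finset.mem_antidiagonal] using hp.2
  · intro p hp hnp
    rw [Finset.HasAntidiagonal.mem_antidiagonal] at hp
    simp only [Finset.mem_filter, Finset.mem_product, Finset.mem_range, not_and] at hnp
    by_cases h1 : p.1 < qq
    · by_cases h2 : p.2 < rr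
      · exact absurd hp (hnp ⟨h1, h2⟩)
      · have : l < p.2 := lt_of_lt_of_le hl (le_of_not_gt h2)
        simp [Nat.choose_eq_zero_of_lt this]
    · have : k < p.1 := lt_of_lt_of_le hk (le_of_not_gt h1)
      simp [Nat.choose_eq_zero_of_lt this]

lemma st6_term_eq (z : ℝ) (k l n i a b : ℕ) :
    (if a ≤ k then (k.choose a : ℝ) * z ^ (k - a) else 0) *
      (if a + b = n then (n.choose i : ℝ) else 0) *
      (if b ≤ l then (l.choose b : ℝ) * z ^ (l - b) else 0) =
    (n.choose i : ℝ) * z ^ (k + l - n) *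
      ((if a + b = n then k.choose a * l.choose b else 0 : ℕ) : ℝ) := by
  by_cases hn : a + b = n
  · simp only [hn, if_pos rfl]
    by_cases ha : a ≤ k
    · by_cases hb : b ≤ l
      · rw [if_pos ha, if_pos hb]
        have he : (k - a) + (l - b) = k + l - n := by omega
        rw [← he, pow_add]
        push_cast
        ring
      · rw [if_neg hb]
        have : l < b := lt_of_not_ge hb
        simp [Nat.choose_eq_zero_of_lt this]
    · rw [if_neg ha]
      have : k < a := lt_of_not_ge ha
      simp [Nat.choose_eq_zero_of_lt this]
  · simp [hn]

lemma st6_part1_sum (z : ℝ) (qq rr n i : ℕ) (k : Fin qq) (l : Fin rr) :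
    (∑ l' : Fin rr, (∑ k' : Fin qq,
      (if (k' : ℕ) ≤ (k : ℕ) then (Nat.choose k k' : ℝ) * z ^ ((k : ℕ) - (k' : ℕ)) else 0) *
      (if (k' : ℕ) + (l' : ℕ) = n then (Nat.choose n i : ℝ) else 0)) *
      (if (l' : ℕ) ≤ (l : ℕ) then (Nat.choose l l' : ℝ) * z ^ ((l : ℕ) - (l' : ℕ)) else 0)) =
    (n.choose i : ℝ) * z ^ ((k : ℕ) + (l : ℕ) - n) * (((k : ℕ) + (l : ℕ)).choose n : ℝ) := by
  have step : ∀ l' : Fin rr, (∑ k' : Fin qq,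
      (if (k' : ℕ) ≤ (k : ℕ) then (Nat.choose k k' : ℝ) * z ^ ((k : ℕ) - (k' : ℕ)) else 0) *
      (if (k' : ℕ) + (l' : ℕ) = n then (Nat.choose n i : ℝ) else 0)) *
      (if (l' : ℕ) ≤ (l : ℕ) then (Nat.choose l l' : ℝ) * z ^ ((l : ℕ) - (l' : ℕ)) else 0) =
      ∑ k' : Fin qq, (n.choose i : ℝ) * z ^ ((k : ℕ) + (l : ℕ) - n) *
        ((if (k' : ℕ) + (l' : ℕ) = n then Nat.choose k k' * Nat.choose l l' else 0 : ℕ) : ℝ) := by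
    intro l'
    rw [Finset.sum_mul]
    exact Finset.sum_congr rfl fun k' _ => st6_term_eq z k l n i k' l'
  rw [Finset.sum_congr rfl fun l' _ => step l']
  rw [← Finset.sum_comm]
  simp_rw [← Finset.mul_sum]
  congr 1
  have h1 : ∀ k' : Fin qq, (∑ l' : Fin rr,
      ((if (k' : ℕ) + (l' : ℕ) = n then Nat.choose k k' * Nat.choose l l' else 0 : ℕ) : ℝ)) =
      ((∑ l' ∈ Finset.range rr, (if (k' : ℕ) + l' = n then Nat.choose k k' * Nat.choose l l' else 0) : ℕ) : ℝ) := by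
    intro k'
    push_cast
    rw [Fin.sum_univ_eq_sum_range (fun b => if (k' : ℕ) + b = n then ((Nat.choose k k' : ℕ) : ℝ) * (Nat.choose l b : ℝ) else 0) rr]
  rw [Finset.sum_congr rfl fun k' _ => h1 k']
  rw [Fin.sum_univ_eq_sum_range (fun a => ((∑ l' ∈ Finset.range rr, (if a + l' = n then Nat.choose k a * Nat.choose l l' else 0) : ℕ) : ℝ)) qq]
  rw [← Nat.cast_sum]
  rw [st6_key_sum k l n qq rr k.isLt l.isLt]

lemma st6_kron_mul_entry {m q : ℕ} {X : Type*} (U : Matrix (Fin q) (Fin q) ℝ)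
    (B : Matrix (Fin m × Fin q) X ℝ) (i : Fin m) (k : Fin q) (x : X) :
    (((1 : Matrix (Fin m) (Fin m) ℝ) ⊗ₖ U) * B) (i, k) x =
      ∑ k' : Fin q, U k k' * B (i, k') x := by
  rw [Matrix.mul_apply, Fintype.sum_prod_type]
  simp [Matrix.one_apply, ite_mul, mul_ite, Finset.sum_ite_eq, Finset.sum_ite_eq']

lemma st6_mul_kron_entry {n r : ℕ} {X : Type*} [Fintype X] (W : Matrix (Fin r) (Fin r) ℝ)
    (B : Matrix X (Fin n × Fin r) ℝ) (j : Fin n) (l : Fin r) (x : X) :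
    (B * ((1 : Matrix (Fin n) (Fin n) ℝ) ⊗ₖ W)) x (j, l) =
      ∑ l' : Fin r, B x (j, l') * W l' l := by
  rw [Matrix.mul_apply, Fintype.sum_prod_type]
  simp [Matrix.one_apply, ite_mul, mul_ite, Finset.sum_ite_eq, Finset.sum_ite_eq']

lemma st6_kron_diag_left (m s : ℕ) :
    Dm m ⊗ₖ (1 : Matrix (Fin s) (Fin s) ℝ) =
      Matrix.diagonal (fun p : Fin m × Fin s => ((p.1 : ℕ).factorial : ℝ)) := by
  ext ⟨a, b⟩ ⟨c, d⟩
  simp only [Matrix.kroneckerMap_apply, Dm, Matrix.diagonal_apply, Matrix.one_apply,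
    Prod.mk.injEq]
  by_cases h1 : a = c <;> by_cases h2 : b = d <;> simp [h1, h2]

lemma st6_kron_diag_right (m s : ℕ) :
    (1 : Matrix (Fin m) (Fin m) ℝ) ⊗ₖ Dm s =
      Matrix.diagonal (fun p : Fin m × Fin s => ((p.2 : ℕ).factorial : ℝ)) := by
  ext ⟨a, b⟩ ⟨c, d⟩
  simp only [Matrix.kroneckerMap_apply, Dm, Matrix.diagonal_apply, Matrix.one_apply,
    Prod.mk.injEq]
  by_cases h1 : a = c <;> by_cases h2 : b = d <;> simp [h1, h2]

end statement6Aux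

theorem statement6 (q r μ ν : ℕ) (hq : 0 < q) (hr : 0 < r) (hμ : 0 < μ) (hν : 0 < ν) :
    (∀ z : ℝ,
      Ncal q r μ ν z =
        ((1 : Matrix (Fin μ) (Fin μ) ℝ) ⊗ₖ Ut q z) * Ahat q r μ ν *
          ((1 : Matrix (Fin ν) (Fin ν) ℝ) ⊗ₖ Wt r z)) ∧
    (Dm μ ⊗ₖ (1 : Matrix (Fin q) (Fin q) ℝ)) * Ahat q r μ ν *
        (Dm ν ⊗ₖ (1 : Matrix (Fin r) (Fin r) ℝ)) =
      ((1 : Matrix (Fin μ) (Fin μ) ℝ) ⊗ₖ Dm q) * Acal q r μ ν 0 *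
        ((1 : Matrix (Fin ν) (Fin ν) ℝ) ⊗ₖ Dm r) := by
  constructor
  · intro z
    ext ⟨i, k⟩ ⟨j, l⟩
    rw [st6_mul_kron_entry]
    simp_rw [st6_kron_mul_entry]
    simp only [Ncal, Ahat, Ut, Wt, Md, Matrix.of_apply]
    rw [st6_iter_pow]
    rw [st6_part1_sum z q r ((i : ℕ) + (j : ℕ)) (i : ℕ) k l]
    rw [Nat.descFactorial_eq_factorial_mul_choose]
    have hfact : (((i : ℕ) + (j : ℕ)).factorial : ℝ) =
        ((((i : ℕ) + (j : ℕ)).choose (i : ℕ) : ℕ) : ℝ) * ((i : ℕ).factorial : ℝ) * ((j : ℕ).factorial : ℝ) := by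
      have hnat : ((i : ℕ) + (j : ℕ)).choose (i : ℕ) * (i : ℕ).factorial * (j : ℕ).factorial =
          ((i : ℕ) + (j : ℕ)).factorial := by
        have := Nat.add_choose_mul_factorial_mul_factorial (j : ℕ) (i : ℕ)
        rw [Nat.add_comm (j : ℕ) (i : ℕ)] at this
        rw [← this]; ring
      exact_mod_cast hnat.symm
    have hif : ((i : ℕ).factorial : ℝ) ≠ 0 := Nat.cast_ne_zero.mpr (Nat.factorial_ne_zero _)
    have hjf : ((j : ℕ).factorial : ℝ) ≠ 0 := Nat.cast_ne_zero.mpr (Nat.factorial_ne_zero _)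
    push_cast
    rw [hfact]
    field_simp
  · ext ⟨i, k⟩ ⟨j, l⟩
    rw [st6_kron_diag_left, st6_kron_diag_left, st6_kron_diag_right, st6_kron_diag_right]
    rw [Matrix.mul_assoc, Matrix.mul_assoc, Matrix.diagonal_mul, Matrix.mul_diagonal,
      Matrix.diagonal_mul, Matrix.mul_diagonal]
    simp only [Ahat, Acal, Amat, Matrix.of_apply]
    by_cases h : (k : ℕ) + (l : ℕ) = (i : ℕ) + (j : ℕ)
    · rw [if_pos h, if_pos (le_of_eq h)]
      have h2 : (i : ℕ) + (j : ℕ) - (k : ℕ) = (l : ℕ) := by omega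
      rw [h2, Nat.sub_self, Nat.choose_self, pow_zero, mul_one, Nat.cast_one, mul_one]
      have hA : ((i : ℕ) + (j : ℕ)).choose (i : ℕ) * (i : ℕ).factorial * (j : ℕ).factorial =
          ((i : ℕ) + (j : ℕ)).factorial := by
        have := Nat.add_choose_mul_factorial_mul_factorial (j : ℕ) (i : ℕ)
        rw [Nat.add_comm (j : ℕ) (i : ℕ)] at this
        rw [← this]; ring
      have hB : ((i : ℕ) + (j : ℕ)).choose (k : ℕ) * (k : ℕ).factorial * (l : ℕ).factorial =
          ((i : ℕ) + (j : ℕ)).factorial := by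
        have := Nat.add_choose_mul_factorial_mul_factorial (l : ℕ) (k : ℕ)
        rw [Nat.add_comm (l : ℕ) (k : ℕ), h] at this
        rw [← this]; ring
      have hnat : (i : ℕ).factorial * (((i : ℕ) + (j : ℕ)).choose (i : ℕ) * (j : ℕ).factorial) =
          (k : ℕ).factorial * (((i : ℕ) + (j : ℕ)).choose (k : ℕ) * (l : ℕ).factorial) := by
        rw [show (i : ℕ).factorial * (((i : ℕ) + (j : ℕ)).choose (i : ℕ) * (j : ℕ).factorial) =
            ((i : ℕ) + (j : ℕ)).choose (i : ℕ) * (i : ℕ).factorial * (j : ℕ).factorial by ring, hA,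
          show (k : ℕ).factorial * (((i : ℕ) + (j : ℕ)).choose (k : ℕ) * (l : ℕ).factorial) =
            ((i : ℕ) + (j : ℕ)).choose (k : ℕ) * (k : ℕ).factorial * (l : ℕ).factorial by ring, hB]
      exact_mod_cast hnat
    · rw [if_neg h]
      by_cases h2 : (k : ℕ) + (l : ℕ) ≤ (i : ℕ) + (j : ℕ)
      · rw [if_pos h2]
        have h3 : (i : ℕ) + (j : ℕ) - (k : ℕ) - (l : ℕ) ≠ 0 := by omega
        rw [zero_pow h3]
        ring
      · rw [if_neg h2]
        ring
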